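/- Let X be a set, g : X → X a map, and n ≥ 1 a natural number such that the fixed point set Fix(g^d) = {x ∈ X : g^d(x) = x} is finite for every divisor d of n. Then n divides Σ_{d|n} μ(d) · #Fix(g^{n/d}), where μ is the Möbius function. -/

import Mathlib

open Function Finset

namespace Stmt14Aux

variable {X : Type*} [DecidableEq X]

/-- the orbit of `x` under `g` as a finset -/
def orb (g : X → X) (n : ℕ) (x : X) : Finset X := (Finset.range n).image (fun j => g^[j] x)

lemma orb_apply (g : X → X) {n : ℕ} (hn : 0 < n) {x : X} (hx : IsPeriodicPt g n x) :
    orb g n (g x) = orb g n x := by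
  ext z
  simp only [orb, mem_image, mem_range]
  constructor
  · rintro ⟨j, hj, rfl⟩
    refine ⟨(j + 1) % n, Nat.mod_lt _ hn, ?_⟩
    rw [hx.iterate_mod_apply, iterate_succ_apply]
  · rintro ⟨j, hj, rfl⟩
    rcases Nat.eq_zero_or_pos j with rfl | hj0
    · exact ⟨n - 1, by omega, by
        rw [← iterate_succ_apply, Nat.succ_eq_add_one, Nat.sub_add_cancel hn]
        exact hx⟩
    · exact ⟨j - 1, by omega, by
        rw [← iterate_succ_apply, Nat.succ_eq_add_one, Nat.sub_add_cancel hj0]⟩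

lemma orb_iterate (g : X → X) {n : ℕ} (hn : 0 < n) {x : X} (hx : IsPeriodicPt g n x) (k : ℕ) :
    orb g n (g^[k] x) = orb g n x := by
  induction k with
  | zero => rfl
  | succ k ih =>
    rw [iterate_succ_apply', orb_apply g hn (hx.apply_iterate k), ih]

lemma card_orb (g : X → X) {n : ℕ} {x : X} (hx : minimalPeriod g x = n) :
    (orb g n x).card = n := by
  rw [orb, Finset.card_image_of_injOn, card_range]
  rw [Finset.coe_range, ← hx]
  exact iterate_injOn_Iio_minimalPeriod

lemma nat_card_eq {p : X → Prop} (h : {x : X | p x}.Finite) :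
    Nat.card {x : X // p x} = h.toFinset.card := by
  rw [show {x : X // p x} = {x : X | p x} from rfl, Nat.card_coe_set_eq,
    Set.ncard_eq_toFinset_card _ h]

lemma dvd_card (g : X → X) (n : ℕ) (hn : 1 ≤ n)
    (hfin : {x : X | g^[n] x = x ∧ minimalPeriod g x = n}.Finite) :
    (n : ℤ) ∣ (Nat.card {x : X // g^[n] x = x ∧ minimalPeriod g x = n} : ℤ) := by
  classical
  have hpos : 0 < n := hn
  set S := hfin.toFinset with hS
  have hcard : Nat.card {x : X // g^[n] x = x ∧ minimalPeriod g x = n} = S.card :=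
    nat_card_eq hfin
  -- orbit membership facts
  have hmem : ∀ x ∈ S, ∀ j : ℕ, g^[j] x ∈ S := by
    intro x hx j
    rw [hS, Set.Finite.mem_toFinset] at hx ⊢
    have hper : IsPeriodicPt g n x := hx.1
    refine ⟨hper.apply_iterate j, ?_⟩
    rw [minimalPeriod_apply_iterate (mk_mem_periodicPts hpos hper) j, hx.2]
  have key : S.card = ∑ b ∈ S.image (orb g n), (S.filter fun a => orb g n a = b).card :=
    Finset.card_eq_sum_card_image (orb g n) S
  have hfib : ∀ b ∈ S.image (orb g n), (S.filter fun a => orb g n a = b).card = n := by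
    intro b hb
    rcases Finset.mem_image.mp hb with ⟨x₀, hx₀, rfl⟩
    have hx₀' := (hS ▸ hx₀ : x₀ ∈ hfin.toFinset)
    rw [Set.Finite.mem_toFinset] at hx₀'
    have hper : IsPeriodicPt g n x₀ := hx₀'.1
    have : S.filter (fun a => orb g n a = orb g n x₀) = orb g n x₀ := by
      ext y
      simp only [mem_filter]
      constructor
      · rintro ⟨hyS, hy⟩
        rw [← hy]
        simp only [orb, mem_image, mem_range]
        exact ⟨0, hpos, rfl⟩
      · intro hy
        simp only [orb, mem_image, mem_range] at hy
        rcases hy with ⟨j, hj, rfl⟩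
        exact ⟨hmem x₀ hx₀ j, orb_iterate g hpos hper j⟩
    rw [this, card_orb g hx₀'.2]
  rw [hcard, key, Finset.sum_congr rfl hfib, Finset.sum_const, smul_eq_mul]
  push_cast
  exact dvd_mul_left _ _

end Stmt14Aux

open Stmt14Aux Function in
/-- if `g : X → X` and `Fix(g^d)` is finite for every divisor `d` of `n ≥ 1`,
then `n` divides `∑_{d ∣ n} μ(d) · #Fix(g^{n/d})`. -/
theorem stmt14 {X : Type*} (g : X → X) (n : ℕ) (hn : 1 ≤ n)
    (hfin : ∀ d, d ∣ n → {x : X | g^[d] x = x}.Finite) :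
    (n : ℤ) ∣ ∑ d ∈ n.divisors,
      ArithmeticFunction.moebius d * (Nat.card {x : X // g^[n / d] x = x} : ℤ) := by
  classical
  set c : ℕ → ℤ := fun m =>
    (Nat.card {x : X // g^[m] x = x ∧ minimalPeriod g x = m} : ℤ) with hc
  set F : ℕ → ℤ := fun m => (Nat.card {x : X // g^[m] x = x} : ℤ) with hF
  have hA : ∀ m > 0, m ∈ {d : ℕ | d ∣ n} → (∑ i ∈ m.divisors, c i) = F m := by
    intro m hm hmdvd
    have hFm : ({x : X | g^[m] x = x}).Finite := hfin m hmdvd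
    set Fm := hFm.toFinset with hFmdef
    have h1 : F m = (Fm.card : ℤ) := by
      simp only [hF]
      exact_mod_cast nat_card_eq hFm
    have h2 : Fm.card = ∑ i ∈ m.divisors, (Fm.filter fun x => minimalPeriod g x = i).card := by
      apply Finset.card_eq_sum_card_fiberwise
      intro x hx
      rw [hFmdef, Finset.mem_coe, Set.Finite.mem_toFinset] at hx
      rw [Finset.mem_coe, Nat.mem_divisors]
      exact ⟨(IsPeriodicPt.minimalPeriod_dvd hx), by omega⟩
    have h3 : ∀ i ∈ m.divisors,
        c i = ((Fm.filter fun x => minimalPeriod g x = i).card : ℤ) := by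
      intro i hi
      rw [Nat.mem_divisors] at hi
      have hifin : ({x : X | g^[i] x = x ∧ minimalPeriod g x = i}).Finite := by
        apply (hfin i (hi.1.trans hmdvd)).subset
        intro x hx; exact hx.1
      simp only [hc]
      norm_cast
      rw [nat_card_eq hifin]
      congr 1
      ext x
      simp only [Set.mem_toFinset, Set.mem_setOf_eq, Finset.mem_filter, hFmdef,
        Set.Finite.mem_toFinset]
      constructor
      · rintro ⟨hfix, hmp⟩
        exact ⟨(show IsPeriodicPt g i x from hfix).trans_dvd hi.1, hmp⟩
      · rintro ⟨_, hmp⟩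
        exact ⟨hmp ▸ iterate_minimalPeriod, hmp⟩
    rw [h1, h2, Finset.sum_congr rfl h3]
    push_cast
    rfl
  have hinv := (ArithmeticFunction.sum_eq_iff_sum_mul_moebius_eq_on (R := ℤ)
    {d : ℕ | d ∣ n} (fun a b hab hb => hab.trans hb)).mp hA n hn (dvd_refl n)
  have hsum : (∑ d ∈ n.divisors,
      (ArithmeticFunction.moebius d : ℤ) * (Nat.card {x : X // g^[n / d] x = x} : ℤ))
      = ∑ x ∈ n.divisorsAntidiagonal, ((ArithmeticFunction.moebius x.1 : ℤ)) * F x.2 := by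
    rw [Nat.sum_divisorsAntidiagonal (f := fun a b => (ArithmeticFunction.moebius a : ℤ) * F b)]
  rw [hsum]
  simp only [Int.cast_id] at hinv ⊢
  rw [hinv, hc]
  exact dvd_card g n hn (by
    apply (hfin n (dvd_refl n)).subset
    intro x hx; exact hx.1)
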